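/- Let m, n ≥ 0 and define T^h(m,n) as the number of Dyck paths p of semilength m+n such that S_j(p) > n+1 for some j, where S_j(p) is the number of up-steps minus right-steps among the first j steps. Then T^h(m,n) = Σ_{i=0}^∞ [C(2m+2n, m - i(n+3) - 2) - 2·C(2m+2n, m - i(n+3) - 3) + C(2m+2n, m - i(n+3) - 4)], where binomial coefficients with negative lower index are 0. -/
import Mathlib


/-- Binomial coefficient `C(n, k)` with integer lower index, taken to be `0`
when the lower index is negative or exceeds the upper index. -/
def chooseZ (n : ℕ) (k : ℤ) : ℤ :=
  if 0 ≤ k ∧ k ≤ (n : ℤ) then (n.choose k.toNat : ℤ) else 0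

/-- The number of up-steps among the first `j` steps of the lattice path `p`
(`true` = up-step `(0,1)`, `false` = right-step `(1,0)`); after `j` steps the
path is at the point `(j - ups p j, ups p j)`. -/
def ups {len : ℕ} (p : Fin len → Bool) (j : ℕ) : ℕ :=
  (Finset.univ.filter (fun i : Fin len => (i : ℕ) < j ∧ p i = true)).card

/- ### chooseZ lemmas -/

lemma chooseZ_eq (n : ℕ) (k : ℤ) :
    chooseZ n k = if 0 ≤ k then (n.choose k.toNat : ℤ) else 0 := by
  unfold chooseZ
  by_cases h1 : 0 ≤ k
  · by_cases h2 : k ≤ (n : ℤ)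
    · rw [if_pos ⟨h1, h2⟩, if_pos h1]
    · rw [if_neg (fun hh => h2 hh.2), if_pos h1,
        Nat.choose_eq_zero_of_lt (by omega), Nat.cast_zero]
  · rw [if_neg (fun hh => h1 hh.1), if_neg h1]

lemma chooseZ_neg {n : ℕ} {k : ℤ} (h : k < 0) : chooseZ n k = 0 := by
  rw [chooseZ_eq, if_neg (by omega)]

lemma chooseZ_gt {n : ℕ} {k : ℤ} (h : (n : ℤ) < k) : chooseZ n k = 0 := by
  unfold chooseZ
  rw [if_neg (fun hh => by omega)]

lemma chooseZ_zero (k : ℤ) : chooseZ 0 k = if k = 0 then 1 else 0 := by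
  rcases lt_trichotomy k 0 with h | h | h
  · rw [chooseZ_neg h, if_neg (by omega)]
  · subst h; rfl
  · rw [chooseZ_gt (by exact_mod_cast h), if_neg (by omega)]

lemma chooseZ_pascal (L : ℕ) (k : ℤ) :
    chooseZ (L + 1) k = chooseZ L k + chooseZ L (k - 1) := by
  rcases lt_trichotomy k 0 with h | h | h
  · rw [chooseZ_neg h, chooseZ_neg h, chooseZ_neg (by omega)]; ring
  · subst h
    rw [chooseZ_neg (show (0:ℤ) - 1 < 0 by norm_num)]
    rw [chooseZ_eq, chooseZ_eq, if_pos le_rfl, if_pos le_rfl]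
    simp
  · obtain ⟨a, rfl⟩ : ∃ a : ℕ, k = (a : ℤ) + 1 := ⟨(k - 1).toNat, by omega⟩
    rw [chooseZ_eq, chooseZ_eq, chooseZ_eq, if_pos (by positivity),
      if_pos (by positivity), if_pos (by omega)]
    rw [show ((a : ℤ) + 1).toNat = a + 1 by omega,
      show ((a : ℤ) + 1 - 1).toNat = a by omega]
    rw [Nat.choose_succ_succ']
    push_cast; ring

lemma chooseZ_symm (n : ℕ) (k : ℤ) : chooseZ n k = chooseZ n ((n : ℤ) - k) := by
  rcases le_or_gt 0 k with h1 | h1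
  · rcases le_or_gt k n with h2 | h2
    · unfold chooseZ
      rw [if_pos ⟨h1, h2⟩, if_pos ⟨by omega, by omega⟩]
      rw [show ((n : ℤ) - k).toNat = n - k.toNat by omega]
      have := (Nat.choose_symm (show k.toNat ≤ n by omega)).symm
      exact_mod_cast congrArg (fun x : ℕ => (x : ℤ)) this
    · rw [chooseZ_gt h2, chooseZ_neg (by omega)]
  · rw [chooseZ_neg h1, chooseZ_gt (by omega)]

/- ### summability -/

lemma chooseZ_summable (L : ℕ) (a d : ℤ) (hd : 1 ≤ d) :
    Summable (fun k : ℤ => chooseZ L (a + k * d)) := by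
  apply summable_of_ne_finset_zero (s := Finset.Icc (-(|a| + L)) (|a| + L))
  intro k hk
  simp only [Finset.mem_Icc, not_and_or, not_le] at hk
  rcases hk with hk | hk
  · apply chooseZ_neg
    have h1 : k * d ≤ k := by nlinarith [abs_nonneg a]
    have h2 := abs_nonneg a
    have h3 := neg_abs_le a
    have h4 := le_abs_self a
    omega
  · apply chooseZ_gt
    have h1 : k ≤ k * d := by nlinarith [abs_nonneg a]
    have h2 := abs_nonneg a
    have h3 := neg_abs_le a
    have h4 := le_abs_self a
    omega

/- ### the reflection sum F -/

noncomputable def Fsum (h L : ℕ) (u : ℤ) : ℤ :=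
  ∑' k : ℤ, (chooseZ L (u + k * ((h : ℤ) + 2))
    - chooseZ L ((L : ℤ) - u - 1 + k * ((h : ℤ) + 2)))

lemma Fsum_eq_sub (h L : ℕ) (u : ℤ) :
    Fsum h L u = (∑' k : ℤ, chooseZ L (u + k * ((h : ℤ) + 2)))
      - ∑' k : ℤ, chooseZ L ((L : ℤ) - u - 1 + k * ((h : ℤ) + 2)) :=
  Summable.tsum_sub (chooseZ_summable L u _ (by omega)) (chooseZ_summable L _ _ (by omega))

lemma Fsum_pascal (h L : ℕ) (u : ℤ) :
    Fsum h (L + 1) u = Fsum h L u + Fsum h L (u - 1) := by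
  have d2 : (1:ℤ) ≤ (h:ℤ) + 2 := by omega
  have key : ∀ k : ℤ, chooseZ (L+1) (u + k * ((h:ℤ) + 2))
      - chooseZ (L+1) ((L:ℤ) + 1 - u - 1 + k * ((h:ℤ) + 2))
      = (chooseZ L (u + k * ((h:ℤ) + 2)) - chooseZ L ((L:ℤ) - u - 1 + k * ((h:ℤ) + 2)))
        + (chooseZ L ((u - 1) + k * ((h:ℤ) + 2))
          - chooseZ L ((L:ℤ) - (u - 1) - 1 + k * ((h:ℤ) + 2))) := by
    intro k
    rw [chooseZ_pascal L (u + k * ((h:ℤ) + 2)),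
      chooseZ_pascal L ((L:ℤ) + 1 - u - 1 + k * ((h:ℤ) + 2))]
    have a1 : u + k * ((h:ℤ) + 2) - 1 = (u - 1) + k * ((h:ℤ) + 2) := by ring
    have a2 : (L:ℤ) + 1 - u - 1 + k * ((h:ℤ) + 2) = (L:ℤ) - (u - 1) - 1 + k * ((h:ℤ) + 2) := by
      ring
    rw [a1, a2,
      show (L:ℤ) - (u - 1) - 1 + k * ((h:ℤ) + 2) - 1 = (L:ℤ) - u - 1 + k * ((h:ℤ) + 2) by ring]
    ring
  unfold Fsum
  have c1 : ((L+1:ℕ):ℤ) = (L:ℤ) + 1 := by push_cast; ring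
  rw [c1, tsum_congr key]
  exact Summable.tsum_add ((chooseZ_summable L u _ d2).sub (chooseZ_summable L _ _ d2))
    ((chooseZ_summable L (u-1) _ d2).sub (chooseZ_summable L _ _ d2))

lemma Fsum_boundary_low (h L : ℕ) (u : ℤ) (hu : (L : ℤ) = 2 * u + 1) :
    Fsum h L u = 0 := by
  have : ∀ k : ℤ, chooseZ L (u + k * ((h : ℤ) + 2))
      - chooseZ L ((L : ℤ) - u - 1 + k * ((h : ℤ) + 2)) = 0 := by
    intro k
    rw [show (L : ℤ) - u - 1 = u by omega]
    ring
  unfold Fsum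
  rw [tsum_congr this]
  exact tsum_zero

lemma Fsum_boundary_high (h L : ℕ) (u : ℤ) (hu : 2 * u = (L : ℤ) + h + 1) :
    Fsum h L u = 0 := by
  have key : ∀ k : ℤ, chooseZ L ((L : ℤ) - u - 1 + k * ((h : ℤ) + 2))
      = chooseZ L (u + (k - 1) * ((h : ℤ) + 2)) := by
    intro k; congr 1; ring_nf; omega
  rw [Fsum_eq_sub, tsum_congr key]
  have := (Equiv.subRight (1 : ℤ)).tsum_eq (fun k => chooseZ L (u + k * ((h : ℤ) + 2)))
  simp only [Equiv.subRight_apply] at this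
  rw [this]
  ring

lemma aux_no_sol {d a k : ℤ} (hd : 0 < d) (h1 : -d < a) (h2 : a < d) (h3 : a ≠ 0) :
    a + k * d ≠ 0 := by
  intro h
  rcases lt_trichotomy k 0 with hk | hk | hk
  · nlinarith [mul_nonneg (show (0:ℤ) ≤ -(k+1) by omega) hd.le]
  · subst hk; simp at h; exact h3 h
  · nlinarith [mul_nonneg (show (0:ℤ) ≤ k - 1 by omega) hd.le]

lemma tsum_indicator_zero (d a : ℤ) (hd : 0 < d) (h1 : -d < a) (h2 : a < d) :
    (∑' k : ℤ, chooseZ 0 (a + k * d)) = if a = 0 then 1 else 0 := by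
  rcases eq_or_ne a 0 with rfl | ha
  · rw [if_pos rfl]
    rw [tsum_eq_single 0 ?_]
    · simp [chooseZ_zero]
    · intro k hk
      rw [chooseZ_zero, if_neg]
      simp only [zero_add]
      intro h
      rcases mul_eq_zero.1 h with h | h
      · exact hk h
      · omega
  · rw [if_neg ha, tsum_congr (fun k => ?_), tsum_zero]
    rw [chooseZ_zero, if_neg (aux_no_sol hd h1 h2 ha)]

lemma Fsum_base (h : ℕ) (u : ℕ) (hu : 2 * u ≤ h + 1) :
    Fsum h 0 (u : ℤ) = if u = 0 then 1 else 0 := by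
  rw [Fsum_eq_sub]
  simp only [Nat.cast_zero]
  have hd : (0:ℤ) < (h:ℤ) + 2 := by omega
  rw [tsum_indicator_zero _ _ hd (by omega) (by omega)]
  have h2 : (∑' k : ℤ, chooseZ 0 ((0 : ℤ) - u - 1 + k * ((h : ℤ) + 2))) = 0 := by
    rw [show ((0:ℤ) - u - 1) = -((u : ℤ) + 1) by ring]
    rw [tsum_indicator_zero _ _ hd (by omega) (by omega), if_neg (by omega)]
  rw [h2]
  simp only [Nat.cast_eq_zero, sub_zero]

/- ### counting lemmas for ups -/

lemma ups_zero {len : ℕ} (p : Fin len → Bool) : ups p 0 = 0 := by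
  simp [ups]

lemma ups_card_filter {len : ℕ} (p : Fin len → Bool) (j : ℕ) :
    ups p j = ∑ i : Fin len, if ((i : ℕ) < j ∧ p i = true) then 1 else 0 := by
  rw [ups, Finset.card_filter]

lemma ups_snoc {L : ℕ} (q : Fin L → Bool) (b : Bool) (j : ℕ) :
    ups (Fin.snoc q b) j = ups q j + if (L < j ∧ b = true) then 1 else 0 := by
  rw [ups_card_filter, ups_card_filter, Fin.sum_univ_castSucc]
  congr 1
  · apply Finset.sum_congr rfl
    intro i _
    simp [Fin.snoc_castSucc]
  · simp [Fin.snoc_last]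

lemma ups_stable {L : ℕ} (q : Fin L → Bool) {j : ℕ} (hj : L ≤ j) :
    ups q j = ups q L := by
  unfold ups
  congr 1
  apply Finset.filter_congr
  intro i _
  have := i.isLt
  constructor <;> (intro h; exact ⟨by omega, h.2⟩)

lemma ups_mono {len : ℕ} (p : Fin len → Bool) {j j' : ℕ} (h : j ≤ j') :
    ups p j ≤ ups p j' := by
  apply Finset.card_le_card
  intro i hi
  simp only [Finset.mem_filter, Finset.mem_univ, true_and] at hi ⊢
  exact ⟨by omega, hi.2⟩

/- ### the path sets -/

def Pset (h L u : ℕ) : Finset (Fin L → Bool) :=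
  Finset.univ.filter (fun p => ups p L = u ∧
    ∀ j ≤ L, j ≤ 2 * ups p j ∧ 2 * ups p j ≤ j + h)

lemma mem_Pset {h L u : ℕ} {p : Fin L → Bool} :
    p ∈ Pset h L u ↔ ups p L = u ∧
      ∀ j ≤ L, j ≤ 2 * ups p j ∧ 2 * ups p j ≤ j + h := by
  simp [Pset]

lemma Pset_decomp (h L u : ℕ) (h1 : L + 1 ≤ 2 * u) (h2 : 2 * u ≤ L + 1 + h) :
    Pset h (L + 1) u =
      ((Pset h L (u - 1)).image (fun q => Fin.snoc q true)) ∪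
      ((Pset h L u).image (fun q => Fin.snoc q false)) := by
  have hu : 1 ≤ u := by omega
  ext p
  rw [mem_Pset, Finset.mem_union, Finset.mem_image, Finset.mem_image]
  constructor
  · rintro ⟨hend, hcond⟩
    have hp : p = Fin.snoc (Fin.init p) (p (Fin.last L)) := (Fin.snoc_init_self p).symm
    set q := Fin.init p with hq
    have hups : ∀ j ≤ L, ups p j = ups q j := by
      intro j hj
      conv_lhs => rw [hp]
      rw [ups_snoc, if_neg (fun hh => absurd hh.1 (by omega))]
      omega
    have hqcond : ∀ j ≤ L, j ≤ 2 * ups q j ∧ 2 * ups q j ≤ j + h := by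
      intro j hj
      rw [← hups j hj]
      exact hcond j (by omega)
    have hlast : ups p (L+1) = ups q L + if (p (Fin.last L) = true) then 1 else 0 := by
      conv_lhs => rw [hp]
      rw [ups_snoc, ups_stable q (by omega)]
      have hc : (L < L + 1 ∧ p (Fin.last L) = true) ↔ (p (Fin.last L) = true) := by
        simp
      rw [if_congr hc rfl rfl]
    cases hb : p (Fin.last L)
    · right
      refine ⟨q, ?_, by rw [hp, hb]⟩
      rw [mem_Pset]
      refine ⟨?_, hqcond⟩
      rw [hb] at hlast
      simp only [Bool.false_eq_true, if_false, Nat.add_zero] at hlast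
      omega
    · left
      refine ⟨q, ?_, by rw [hp, hb]⟩
      rw [mem_Pset]
      refine ⟨?_, hqcond⟩
      rw [hb] at hlast
      simp only [if_true] at hlast
      omega
  · rintro (⟨q, hq, rfl⟩ | ⟨q, hq, rfl⟩) <;> rw [mem_Pset] at hq
    · have hups : ∀ j ≤ L, ups (Fin.snoc q true) j = ups q j := by
        intro j hj; rw [ups_snoc, if_neg (fun hh => absurd hh.1 (by omega))]; omega
      have hend : ups (Fin.snoc q true) (L+1) = u := by
        rw [ups_snoc, if_pos ⟨by omega, rfl⟩, ups_stable q (by omega), hq.1]; omega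
      refine ⟨hend, fun j hj => ?_⟩
      rcases Nat.lt_or_ge j (L+1) with hjl | hjl
      · rw [hups j (by omega)]; exact hq.2 j (by omega)
      · have : j = L + 1 := by omega
        subst this
        rw [hend]; omega
    · have hups : ∀ j ≤ L, ups (Fin.snoc q false) j = ups q j := by
        intro j hj; rw [ups_snoc, if_neg (by simp)]; omega
      have hend : ups (Fin.snoc q false) (L+1) = u := by
        rw [ups_snoc, if_neg (by simp), ups_stable q (by omega), hq.1]; omega
      refine ⟨hend, fun j hj => ?_⟩
      rcases Nat.lt_or_ge j (L+1) with hjl | hjl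
      · rw [hups j (by omega)]; exact hq.2 j (by omega)
      · have : j = L + 1 := by omega
        subst this
        rw [hend]; omega

lemma snoc_injective {L : ℕ} (b : Bool) :
    Function.Injective (fun q : Fin L → Bool => (Fin.snoc q b : Fin (L+1) → Bool)) := by
  intro q q' hqq
  have := congrArg Fin.init hqq
  simpa [Fin.init_snoc] using this

lemma Pset_card_succ (h L u : ℕ) (h1 : L + 1 ≤ 2 * u) (h2 : 2 * u ≤ L + 1 + h) :
    (Pset h (L + 1) u).card = (Pset h L (u - 1)).card + (Pset h L u).card := by
  rw [Pset_decomp h L u h1 h2]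
  rw [Finset.card_union_of_disjoint, Finset.card_image_of_injective _ (snoc_injective true),
    Finset.card_image_of_injective _ (snoc_injective false)]
  rw [Finset.disjoint_left]
  rintro p hp hp'
  rw [Finset.mem_image] at hp hp'
  obtain ⟨q, _, rfl⟩ := hp
  obtain ⟨q', _, hq'⟩ := hp'
  have := congrFun hq' (Fin.last L)
  simp [Fin.snoc_last] at this

lemma Pset_empty_low (h L u : ℕ) (hlt : 2 * u < L) : Pset h L u = ∅ := by
  rw [Finset.eq_empty_iff_forall_notMem]
  intro p hp
  rw [mem_Pset] at hp
  have := (hp.2 L le_rfl).1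
  rw [hp.1] at this
  omega

lemma Pset_empty_high (h L u : ℕ) (hlt : L + h < 2 * u) : Pset h L u = ∅ := by
  rw [Finset.eq_empty_iff_forall_notMem]
  intro p hp
  rw [mem_Pset] at hp
  have := (hp.2 L le_rfl).2
  rw [hp.1] at this
  omega

/- ### main counting lemma -/

lemma Pset_card_eq (h : ℕ) : ∀ L u : ℕ, L ≤ 2 * u + 1 → 2 * u ≤ L + h + 1 →
    ((Pset h L u).card : ℤ) = Fsum h L (u : ℤ) := by
  intro L
  induction L with
  | zero =>
    intro u hu1 hu2
    rw [Fsum_base h u (by omega)]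
    rcases eq_or_ne u 0 with rfl | hu
    · rw [if_pos rfl]
      have : Pset h 0 0 = Finset.univ := by
        rw [Finset.eq_univ_iff_forall]
        intro p
        rw [mem_Pset]
        refine ⟨ups_zero p, fun j hj => ?_⟩
        interval_cases j
        rw [ups_zero]; omega
      rw [this]
      simp [Finset.card_univ]
    · rw [if_neg hu]
      have : Pset h 0 u = ∅ := by
        rw [Finset.eq_empty_iff_forall_notMem]
        intro p hp
        rw [mem_Pset] at hp
        rw [ups_zero] at hp
        exact hu hp.1.symm
      simp [this]
  | succ L ih =>
    intro u hu1 hu2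
    rcases Nat.lt_or_ge (2 * u) (L + 1) with hc1 | hc1
    · -- boundary low : L = 2u
      rw [Pset_empty_low h (L+1) u hc1]
      rw [Fsum_boundary_low h (L+1) (u : ℤ) (by push_cast; omega)]
      simp
    rcases Nat.lt_or_ge (L + 1 + h) (2 * u) with hc2 | hc2
    · rw [Pset_empty_high h (L+1) u hc2]
      rw [Fsum_boundary_high h (L+1) (u : ℤ) (by push_cast; omega)]
      simp
    · have hu : 1 ≤ u := by omega
      rw [Pset_card_succ h L u hc1 hc2]
      rw [Fsum_pascal]
      rw [← ih u (by omega) (by omega),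
        show ((u:ℤ) - 1) = ((u - 1 : ℕ) : ℤ) by omega,
        ← ih (u - 1) (by omega) (by omega)]
      push_cast
      ring

lemma chooseZ_shift_zero (L : ℕ) (a D : ℤ) (hD : 0 < D) (h1 : a < D) (h2 : (L:ℤ) - a < D) :
    ∀ k : ℤ, k ≠ 0 → chooseZ L (a + k * D) = 0 := by
  intro k hk
  rcases lt_or_gt_of_ne hk with hk | hk
  · apply chooseZ_neg
    nlinarith [mul_nonneg (show (0:ℤ) ≤ -(k+1) by omega) hD.le]
  · apply chooseZ_gt
    nlinarith [mul_nonneg (show (0:ℤ) ≤ k-1 by omega) hD.le]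

lemma tsum_single_term (L : ℕ) (a D : ℤ) (hD : 0 < D) (h1 : a < D) (h2 : (L:ℤ) - a < D) :
    (∑' k : ℤ, chooseZ L (a + k * D)) = chooseZ L a := by
  rw [tsum_eq_single 0 (fun k hk => chooseZ_shift_zero L a D hD h1 h2 k hk)]
  norm_num

lemma Fsum_all (h L u : ℕ) (h1 : (u:ℤ) < (h:ℤ)+2) (h2 : (L:ℤ) - u < (h:ℤ)+2)
    (h3 : (L:ℤ) - u - 1 < (h:ℤ)+2) (h4 : (L:ℤ) - ((L:ℤ) - u - 1) < (h:ℤ)+2) :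
    Fsum h L (u : ℤ) = chooseZ L (u : ℤ) - chooseZ L ((L:ℤ) - u - 1) := by
  rw [Fsum_eq_sub, tsum_single_term L (u:ℤ) _ (by omega) h1 h2,
    tsum_single_term L ((L:ℤ) - u - 1) _ (by omega) h3 h4]

/-- Let `m, n ≥ 0`. The number `T^h(m,n)` of Dyck paths `p` of semilength `m+n`
such that the height `S_j = (#ups) - (#rights)` exceeds `n+1` for some `j`
equals `Σ_{i=0}^∞ [C(2m+2n, m - i(n+3) - 2) - 2 C(2m+2n, m - i(n+3) - 3)
+ C(2m+2n, m - i(n+3) - 4)]` (binomial coefficients with negative lower index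
being `0`). -/
theorem count_excluded_dyck_paths (m n : ℕ) :
    (((Finset.univ : Finset (Fin (2 * (m + n)) → Bool)).filter (fun p =>
        ups p (2 * (m + n)) = m + n ∧
        (∀ j ≤ 2 * (m + n), j ≤ 2 * ups p j) ∧
        ∃ j ≤ 2 * (m + n), j + (n + 1) < 2 * ups p j)).card : ℤ)
      = ∑' i : ℕ, (chooseZ (2 * m + 2 * n) ((m : ℤ) - i * (n + 3) - 2)
          - 2 * chooseZ (2 * m + 2 * n) ((m : ℤ) - i * (n + 3) - 3)
          + chooseZ (2 * m + 2 * n) ((m : ℤ) - i * (n + 3) - 4)) := by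
  -- abbreviations
  have hsub : Pset (n+1) (2*(m+n)) (m+n) ⊆ Pset (2*(m+n)) (2*(m+n)) (m+n) := by
    intro p hp
    rw [mem_Pset] at hp ⊢
    refine ⟨hp.1, fun j hj => ⟨(hp.2 j hj).1, ?_⟩⟩
    have h := ups_mono p hj
    rw [hp.1] at h
    omega
  have hset : (Finset.univ : Finset (Fin (2 * (m + n)) → Bool)).filter (fun p =>
        ups p (2 * (m + n)) = m + n ∧
        (∀ j ≤ 2 * (m + n), j ≤ 2 * ups p j) ∧
        ∃ j ≤ 2 * (m + n), j + (n + 1) < 2 * ups p j)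
      = Pset (2*(m+n)) (2*(m+n)) (m+n) \ Pset (n+1) (2*(m+n)) (m+n) := by
    ext p
    simp only [Finset.mem_filter, Finset.mem_univ, true_and, Finset.mem_sdiff, mem_Pset]
    constructor
    · rintro ⟨h1, h2, j, hj, hjlt⟩
      have hm : ∀ jj, jj ≤ 2*(m+n) → ups p jj ≤ m+n := by
        intro jj hjj
        have h := ups_mono p hjj
        rw [h1] at h
        exact h
      refine ⟨⟨h1, fun jj hjj => ⟨h2 jj hjj, by have := hm jj hjj; omega⟩⟩, ?_⟩
      rintro ⟨-, hall⟩
      have := (hall j hj).2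
      omega
    · rintro ⟨⟨h1, hcond⟩, hnot⟩
      refine ⟨h1, fun j hj => (hcond j hj).1, ?_⟩
      by_contra hno
      push_neg at hno
      exact hnot ⟨h1, fun j hj => ⟨(hcond j hj).1, hno j hj⟩⟩
  rw [hset, Finset.card_sdiff_of_subset hsub,
    Nat.cast_sub (Finset.card_le_card hsub),
    Pset_card_eq (2*(m+n)) (2*(m+n)) (m+n) (by omega) (by omega),
    Pset_card_eq (n+1) (2*(m+n)) (m+n) (by omega) (by omega)]
  -- the unconstrained count
  have hG : Fsum (2*(m+n)) (2*(m+n)) (((m+n) : ℕ) : ℤ)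
      = chooseZ (2*(m+n)) (((m+n) : ℕ) : ℤ) - chooseZ (2*(m+n)) ((((m+n) : ℕ) : ℤ) - 1) := by
    rw [Fsum_all (2*(m+n)) (2*(m+n)) (m+n) (by push_cast; omega) (by push_cast; omega)
      (by push_cast; omega) (by push_cast; omega)]
    congr 1
    congr 1
    push_cast; ring
  -- the t function
  set t : ℤ → ℤ := fun k => chooseZ (2*(m+n)) ((((m+n) : ℕ) : ℤ) + k * ((n:ℤ)+3))
    - chooseZ (2*(m+n)) ((((m+n) : ℕ) : ℤ) - 1 + k * ((n:ℤ)+3)) with ht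
  have hF : Fsum (n+1) (2*(m+n)) (((m+n) : ℕ) : ℤ) = ∑' k : ℤ, t k := by
    unfold Fsum
    apply tsum_congr
    intro k
    rw [ht]
    congr 2 <;> push_cast <;> ring
  have hsum1 : Summable (fun k : ℤ => t k) := by
    rw [ht]
    exact (chooseZ_summable _ _ _ (by omega)).sub (chooseZ_summable _ _ _ (by omega))
  have hsnat : Summable (fun i : ℕ => t i) :=
    hsum1.comp_injective (fun a b hab => by exact_mod_cast hab)
  have hsneg : Summable (fun i : ℕ => t (-(i+1))) :=
    hsum1.comp_injective (fun a b hab => by omega)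
  have hsnat1 : Summable (fun i : ℕ => t (i+1)) := by
    have := (summable_nat_add_iff (f := fun i : ℕ => t i) 1).2 hsnat
    apply this.congr
    intro i
    exact congrArg t (by push_cast; ring)
  have hsplit : (∑' k : ℤ, t k) = t 0 + (∑' i : ℕ, t (i+1)) + (∑' i : ℕ, t (-(i+1))) := by
    rw [tsum_of_nat_of_neg_add_one hsnat hsneg, Summable.tsum_eq_zero_add hsnat]
    have h1 : t ((0:ℕ):ℤ) = t 0 := congrArg t (by norm_num)
    have h2 : (∑' i : ℕ, t (↑(i+1) : ℤ)) = ∑' i : ℕ, t ((i:ℤ)+1) :=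
      tsum_congr (fun i => congrArg t (by push_cast; ring))
    rw [h1, h2]
  have ht0 : t 0 = chooseZ (2*(m+n)) ((m+n : ℕ) : ℤ) - chooseZ (2*(m+n)) (((m+n : ℕ) : ℤ) - 1) := by
    rw [ht]
    norm_num
  -- pointwise identification with the RHS terms
  have hterm : ∀ i : ℕ, chooseZ (2 * m + 2 * n) ((m : ℤ) - i * (n + 3) - 2)
          - 2 * chooseZ (2 * m + 2 * n) ((m : ℤ) - i * (n + 3) - 3)
          + chooseZ (2 * m + 2 * n) ((m : ℤ) - i * (n + 3) - 4)
        = -(t ((i:ℤ)+1) + t (-((i:ℤ)+1))) := by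
    intro i
    have hnn : (2 * m + 2 * n) = 2 * (m + n) := by ring
    rw [ht, hnn]
    have e1 : chooseZ (2*(m+n)) (((m+n : ℕ) : ℤ) + ((i:ℤ)+1) * ((n:ℤ)+3))
        = chooseZ (2*(m+n)) ((m : ℤ) - i * (n + 3) - 3) := by
      rw [chooseZ_symm]; congr 1; push_cast; ring
    have e2 : chooseZ (2*(m+n)) (((m+n : ℕ) : ℤ) - 1 + ((i:ℤ)+1) * ((n:ℤ)+3))
        = chooseZ (2*(m+n)) ((m : ℤ) - i * (n + 3) - 2) := by
      rw [chooseZ_symm]; congr 1; push_cast; ring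
    have e3 : chooseZ (2*(m+n)) (((m+n : ℕ) : ℤ) + (-((i:ℤ)+1)) * ((n:ℤ)+3))
        = chooseZ (2*(m+n)) ((m : ℤ) - i * (n + 3) - 3) := by
      congr 1; push_cast; ring
    have e4 : chooseZ (2*(m+n)) (((m+n : ℕ) : ℤ) - 1 + (-((i:ℤ)+1)) * ((n:ℤ)+3))
        = chooseZ (2*(m+n)) ((m : ℤ) - i * (n + 3) - 4) := by
      congr 1; push_cast; ring
    simp only [e1, e2, e3, e4]
    ring
  rw [tsum_congr hterm, hG, hF, hsplit, ht0]
  rw [tsum_neg]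
  rw [Summable.tsum_add hsnat1 hsneg]
  ring
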